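/- Tail bound from moments: if a mechanism M has log moment generating function β_M(υ) = max over neighboring d,d' of ln E[e^{υ·c}] (c the privacy loss random variable), then for any ε > 0, M is (ε, δ)-differentially private with δ = min over υ > 0 of exp(β_M(υ) − υε). -/

import Mathlib

open scoped ENNReal

/-- Tail bound from moments: if the log moment generating function of the privacy loss
of `M` at `υ > 0` is `β = ln E[e^{υ·c}]`, then `M` is `(ε, δ)`-DP with
`δ = exp(β − υε)` (hence with the minimum over `υ > 0`). -/
theorem dp_from_moments {Ω : Type*} (P Q : PMF Ω) (ε υ : ℝ) (hε : 0 < ε) (hυ : 0 < υ)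
    (habs : ∀ o, Q o = 0 → P o = 0)
    (E : ℝ≥0∞)
    (hE : E = ∑' o, P o *
      ENNReal.ofReal (Real.exp (υ * Real.log ((P o).toReal / (Q o).toReal))))
    (hfin : E ≠ ⊤) :
    ∀ O : Set Ω,
      P.toOuterMeasure O ≤ ENNReal.ofReal (Real.exp ε) * Q.toOuterMeasure O
        + ENNReal.ofReal (Real.exp (Real.log E.toReal - υ * ε)) := by
  intro O
  set f : Ω → ℝ≥0∞ := fun o => P o *
      ENNReal.ofReal (Real.exp (υ * Real.log ((P o).toReal / (Q o).toReal))) with hf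
  set B : Set Ω := {o | ENNReal.ofReal (Real.exp ε) * Q o < P o} with hB
  -- key pointwise bound on B
  have key : ∀ o ∈ B, P o ≤ ENNReal.ofReal (Real.exp (-(υ * ε))) * f o := by
    intro o ho
    have hQ0 : Q o ≠ 0 := by
      intro h
      have hP0 := habs o h
      simp [hB, h, hP0] at ho
    have hP0 : P o ≠ 0 := by
      intro h
      simp [hB, h] at ho
    have hPt : P o ≠ ⊤ := (lt_of_le_of_lt (P.coe_le_one o) ENNReal.one_lt_top).ne
    have hQt : Q o ≠ ⊤ := (lt_of_le_of_lt (Q.coe_le_one o) ENNReal.one_lt_top).ne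
    have hQpos : 0 < (Q o).toReal := ENNReal.toReal_pos hQ0 hQt
    have hlt : Real.exp ε * (Q o).toReal < (P o).toReal := by
      have := (ENNReal.toReal_lt_toReal (by
        exact ENNReal.mul_ne_top ENNReal.ofReal_ne_top hQt) hPt).2 ho
      rwa [ENNReal.toReal_mul, ENNReal.toReal_ofReal (Real.exp_pos ε).le] at this
    have hratio : Real.exp ε < (P o).toReal / (Q o).toReal := by
      rw [lt_div_iff₀ hQpos]
      linarith
    have hlog : ε < Real.log ((P o).toReal / (Q o).toReal) := by
      have hrpos : 0 < (P o).toReal / (Q o).toReal :=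
        lt_trans (Real.exp_pos ε) hratio
      exact (Real.lt_log_iff_exp_lt hrpos).2 hratio
    have hexp : Real.exp (υ * ε) ≤ Real.exp (υ * Real.log ((P o).toReal / (Q o).toReal)) :=
      Real.exp_le_exp.2 (by nlinarith)
    calc P o = P o * ENNReal.ofReal (Real.exp (-(υ * ε)) * Real.exp (υ * ε)) := by
              rw [← Real.exp_add]; simp
      _ = ENNReal.ofReal (Real.exp (-(υ * ε))) * (P o * ENNReal.ofReal (Real.exp (υ * ε))) := by
              rw [ENNReal.ofReal_mul (Real.exp_pos _).le]; ring
      _ ≤ ENNReal.ofReal (Real.exp (-(υ * ε))) * f o := by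
              have h2 : P o * ENNReal.ofReal (Real.exp (υ * ε)) ≤ f o := by
                rw [hf]
                exact mul_le_mul_right (ENNReal.ofReal_le_ofReal hexp) _
              exact mul_le_mul_right h2 _
  have hEpos : E ≠ 0 := by
    intro h
    rw [h] at hE
    have : ∀ o, P o = 0 := by
      intro o
      have := (ENNReal.tsum_eq_zero.1 hE.symm) o
      rcases mul_eq_zero.1 this with h' | h'
      · exact h'
      · exact absurd h' (by positivity)
    have h1 := P.tsum_coe
    simp [this] at h1
  -- split O
  have hsplit : P.toOuterMeasure O ≤ P.toOuterMeasure (O ∩ B) + P.toOuterMeasure (O \ B) := by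
    have : O ⊆ (O ∩ B) ∪ (O \ B) := by
      intro o ho
      by_cases h : o ∈ B
      · exact Or.inl ⟨ho, h⟩
      · exact Or.inr ⟨ho, h⟩
    calc P.toOuterMeasure O ≤ P.toOuterMeasure ((O ∩ B) ∪ (O \ B)) :=
          P.toOuterMeasure.mono this
      _ ≤ _ := MeasureTheory.measure_union_le _ _
  -- bound bad part
  have hbad : P.toOuterMeasure (O ∩ B) ≤ ENNReal.ofReal (Real.exp (-(υ * ε))) * E := by
    rw [PMF.toOuterMeasure_apply, hE]
    calc (∑' o, Set.indicator (O ∩ B) (⇑P) o)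
        ≤ ∑' o, ENNReal.ofReal (Real.exp (-(υ * ε))) * f o := by
          apply ENNReal.tsum_le_tsum
          intro o
          by_cases h : o ∈ O ∩ B
          · rw [Set.indicator_of_mem h]
            exact key o h.2
          · rw [Set.indicator_of_notMem h]
            exact zero_le
      _ = ENNReal.ofReal (Real.exp (-(υ * ε))) * ∑' o, f o := ENNReal.tsum_mul_left
  -- bound good part
  have hgood : P.toOuterMeasure (O \ B) ≤ ENNReal.ofReal (Real.exp ε) * Q.toOuterMeasure O := by
    rw [PMF.toOuterMeasure_apply, PMF.toOuterMeasure_apply, ← ENNReal.tsum_mul_left]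
    apply ENNReal.tsum_le_tsum
    intro o
    by_cases h : o ∈ O \ B
    · rw [Set.indicator_of_mem h, Set.indicator_of_mem h.1]
      exact not_lt.1 h.2
    · rw [Set.indicator_of_notMem h]
      exact zero_le
  -- identify δ
  have hδ : ENNReal.ofReal (Real.exp (-(υ * ε))) * E =
      ENNReal.ofReal (Real.exp (Real.log E.toReal - υ * ε)) := by
    have hEt : 0 < E.toReal := ENNReal.toReal_pos hEpos hfin
    nth_rewrite 1 [← ENNReal.ofReal_toReal hfin]
    rw [← ENNReal.ofReal_mul (Real.exp_pos _).le]
    congr 1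
    rw [Real.exp_sub, Real.exp_log hEt, Real.exp_neg]
    field_simp
  calc P.toOuterMeasure O ≤ P.toOuterMeasure (O ∩ B) + P.toOuterMeasure (O \ B) := hsplit
    _ ≤ ENNReal.ofReal (Real.exp (-(υ * ε))) * E
        + ENNReal.ofReal (Real.exp ε) * Q.toOuterMeasure O := add_le_add hbad hgood
    _ = _ := by rw [hδ, add_comm]
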